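/- Let v be a non-constant analytic function on 𝕋 = ℝ/ℤ whose shortest positive period is 1. Then there exist s ∈ ℕ and c > 0 such that max_{0≤l≤s} |∂_θ^l (v(θ+φ) − v(θ))| ≥ c ‖φ‖_𝕋 for all θ, φ ∈ 𝕋. -/

import Mathlib

open Set Function Filter Topology

private lemma analytic_flat_zero {f : ℝ → ℝ} (hf : ∀ x, AnalyticAt ℝ f x) {θ : ℝ}
    (h : ∀ k, iteratedDeriv k f θ = 0) : ∀ x, f x = 0 := by
  obtain ⟨p, hp⟩ := hf θ
  have h1 : ∀ n, p n (fun _ => (1:ℝ)) = 0 := by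
    intro n
    obtain ⟨r, hpr⟩ := hp
    have h2 := hpr.factorial_smul (1:ℝ) n
    rw [← iteratedDeriv_eq_iteratedFDeriv, h n, smul_eq_zero] at h2
    rcases h2 with h2 | h2
    · exact absurd h2 (Nat.factorial_ne_zero n)
    · exact h2
  have hp0 : p = 0 := by
    ext n : 1
    refine ContinuousMultilinearMap.ext fun m => ?_
    have h3 := (p n).map_smul_univ m (fun _ => (1:ℝ))
    simp only [smul_eq_mul, mul_one] at h3
    simp [h3, h1 n]
  rw [hp0] at hp
  have hev := hp.eventually_eq_zero
  have hA : AnalyticOnNhd ℝ f univ := fun x _ => hf x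
  have hB : AnalyticOnNhd ℝ (fun _ : ℝ => (0:ℝ)) univ := fun x _ => analyticAt_const
  have := hA.eq_of_eventuallyEq hB hev
  exact fun x => congrFun this x

private lemma periodic_iteratedDeriv {v : ℝ → ℝ} (hper : Function.Periodic v 1) (k : ℕ) :
    Function.Periodic (iteratedDeriv k v) 1 := by
  intro x
  have h := iteratedDeriv_comp_add_const k v 1
  have h2 : (fun z => v (z + 1)) = v := funext hper
  calc iteratedDeriv k v (x + 1) = iteratedDeriv k (fun z => v (z + 1)) x :=
        (congrFun h x).symm
    _ = iteratedDeriv k v x := by rw [h2]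

private lemma iteratedDeriv_sub' {f g : ℝ → ℝ} (hf : ContDiff ℝ (⊤ : ℕ∞) f)
    (hg : ContDiff ℝ (⊤ : ℕ∞) g) (l : ℕ) (θ : ℝ) :
    iteratedDeriv l (fun t => f t - g t) θ = iteratedDeriv l f θ - iteratedDeriv l g θ := by
  have h : (fun t => f t - g t) = f - g := rfl
  rw [h, ← iteratedDerivWithin_univ, ← iteratedDerivWithin_univ, ← iteratedDerivWithin_univ]
  exact iteratedDerivWithin_sub (mem_univ θ) uniqueDiffOn_univ
    ((hf.of_le (by exact_mod_cast le_top)).contDiffWithinAt)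
    ((hg.of_le (by exact_mod_cast le_top)).contDiffWithinAt)

private lemma key_rewrite {v : ℝ → ℝ} (hvC : ContDiff ℝ (⊤ : ℕ∞) v) (l : ℕ) (ψ θ : ℝ) :
    iteratedDeriv l (fun t => v (t + ψ) - v t) θ
      = iteratedDeriv l v (θ + ψ) - iteratedDeriv l v θ := by
  have hshift : ContDiff ℝ (⊤ : ℕ∞) (fun t => v (t + ψ)) :=
    hvC.comp (contDiff_id.add contDiff_const)
  rw [iteratedDeriv_sub' hshift hvC l θ]
  rw [iteratedDeriv_comp_add_const l v ψ]

private lemma claimA {v : ℝ → ℝ} (hv : ∀ x : ℝ, AnalyticAt ℝ v x)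
    (hvC : ContDiff ℝ (⊤ : ℕ∞) v)
    (hnc : ∃ x y : ℝ, v x ≠ v y) (θ : ℝ) :
    ∃ k, 1 ≤ k ∧ iteratedDeriv k v θ ≠ 0 := by
  by_contra h
  push_neg at h
  have hf : ∀ x, AnalyticAt ℝ (fun x => v x - v θ) x := fun x => (hv x).sub analyticAt_const
  have hall : ∀ k, iteratedDeriv k (fun x => v x - v θ) θ = 0 := by
    intro k
    rw [iteratedDeriv_sub' hvC contDiff_const k θ]
    cases k with
    | zero => simp
    | succ n =>
      have hc : iteratedDeriv (n+1) (fun _ : ℝ => v θ) θ = 0 := by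
        rw [iteratedDeriv_eq_iteratedFDeriv, iteratedFDeriv_const_of_ne (Nat.succ_ne_zero n)]
        simp
      rw [hc, h (n+1) (Nat.le_add_left 1 n), sub_zero]
  have := analytic_flat_zero hf hall
  obtain ⟨x, y, hxy⟩ := hnc
  exact hxy (by have hx := this x; have hy := this y; linarith)

private lemma per_int {v : ℝ → ℝ} (hper : Function.Periodic v 1)
    (hshort : ∀ p : ℝ, 0 < p → p < 1 → ¬ Function.Periodic v p)
    {ψ : ℝ} (h : Function.Periodic v ψ) : ∃ n : ℤ, ψ = n := by
  have hq : Function.Periodic v (Int.fract ψ) := by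
    intro x
    have h1 : x + Int.fract ψ = (x + ψ) - (⌊ψ⌋ : ℤ) * 1 := by
      have : Int.fract ψ = ψ - ⌊ψ⌋ := rfl
      rw [this]; ring
    rw [h1, hper.sub_int_mul_eq, h x]
  rcases eq_or_lt_of_le (Int.fract_nonneg ψ) with h0 | h0
  · refine ⟨⌊ψ⌋, ?_⟩
    have : Int.fract ψ = ψ - ⌊ψ⌋ := rfl
    rw [this] at h0; linarith
  · exact absurd hq (hshort _ h0 (Int.fract_lt_one ψ))

private lemma claimB {v : ℝ → ℝ} (hv : ∀ x : ℝ, AnalyticAt ℝ v x)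
    (hvC : ContDiff ℝ (⊤ : ℕ∞) v) (hper : Function.Periodic v 1)
    (hshort : ∀ p : ℝ, 0 < p → p < 1 → ¬ Function.Periodic v p) :
    ∀ θ ψ : ℝ, (∀ n : ℤ, ψ ≠ (n:ℝ)) →
      ∃ l, iteratedDeriv l v (θ + ψ) - iteratedDeriv l v θ ≠ 0 := by
  intro θ ψ hn
  by_contra h
  push_neg at h
  have hg : ∀ x, AnalyticAt ℝ (fun t => v (t + ψ) - v t) x := by
    intro x
    have inner : AnalyticAt ℝ (fun t : ℝ => t + ψ) x := analyticAt_id.add analyticAt_const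
    have h1 := AnalyticAt.comp (g := v) (f := fun t : ℝ => t + ψ) (x := x) (hv (x + ψ)) inner
    exact (by exact h1 : AnalyticAt ℝ (fun t : ℝ => v (t + ψ)) x).sub (hv x)
  have hall : ∀ l, iteratedDeriv l (fun t => v (t + ψ) - v t) θ = 0 := by
    intro l; rw [key_rewrite hvC]; exact h l
  have hzero := analytic_flat_zero hg hall
  have hperψ : Function.Periodic v ψ := by
    intro x
    have := hzero x
    linarith [this]
  obtain ⟨n, hn'⟩ := per_int hper hshort hperψ
  exact hn n hn'

private lemma step1 {v : ℝ → ℝ} (Dcont : ∀ k, Continuous (iteratedDeriv k v))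
    (clA : ∀ θ : ℝ, ∃ k, 1 ≤ k ∧ iteratedDeriv k v θ ≠ 0) :
    ∃ (s₁ : ℕ) (δ : ℝ), 0 < δ ∧ 1 ≤ s₁ ∧
      ∀ θ ∈ Icc (0:ℝ) 1, ∃ k, 1 ≤ k ∧ k ≤ s₁ ∧ δ ≤ |iteratedDeriv k v θ| := by
  set U : ℕ → Set ℝ := fun s => {θ | ∃ k, 1 ≤ k ∧ k ≤ s ∧ iteratedDeriv k v θ ≠ 0} with hU
  have hopen : ∀ s, IsOpen (U s) := by
    intro s
    have : U s = ⋃ k ∈ Finset.Icc 1 s, {θ | iteratedDeriv k v θ ≠ 0} := by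
      ext θ
      simp only [hU, mem_setOf_eq, mem_iUnion, Finset.mem_Icc, exists_prop]
      constructor
      · rintro ⟨k, h1, h2, h3⟩; exact ⟨k, ⟨h1, h2⟩, h3⟩
      · rintro ⟨k, ⟨h1, h2⟩, h3⟩; exact ⟨k, h1, h2, h3⟩
    rw [this]
    exact isOpen_biUnion fun k _ => isOpen_compl_singleton.preimage (Dcont k)
  have hcover : Icc (0:ℝ) 1 ⊆ ⋃ s : ℕ, U s := by
    intro θ _
    obtain ⟨k, hk1, hk⟩ := clA θ
    exact mem_iUnion.mpr ⟨k, k, hk1, le_refl k, hk⟩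
  obtain ⟨t, ht⟩ := isCompact_Icc.elim_finite_subcover U hopen hcover
  set s₁ := max (t.sup id) 1 with hs₁
  have hs₁all : ∀ θ ∈ Icc (0:ℝ) 1, ∃ k, 1 ≤ k ∧ k ≤ s₁ ∧ iteratedDeriv k v θ ≠ 0 := by
    intro θ hθ
    obtain ⟨s, hs, hmem⟩ := mem_iUnion₂.mp (ht hθ)
    obtain ⟨k, h1, h2, h3⟩ := hmem
    exact ⟨k, h1, le_trans h2 (le_trans (Finset.le_sup (f := id) hs) (le_max_left _ _)), h3⟩
  -- now minimum of the sum
  set F : ℝ → ℝ := fun θ => ∑ k ∈ Finset.Icc 1 s₁, |iteratedDeriv k v θ| with hF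
  have hFc : Continuous F := continuous_finset_sum _ fun k _ => (Dcont k).abs
  obtain ⟨θ₀, hθ₀, hmin⟩ := isCompact_Icc.exists_isMinOn (nonempty_Icc.mpr zero_le_one)
    hFc.continuousOn
  have hFpos : ∀ θ ∈ Icc (0:ℝ) 1, 0 < F θ := by
    intro θ hθ
    obtain ⟨k, h1, h2, h3⟩ := hs₁all θ hθ
    have : |iteratedDeriv k v θ| ≤ F θ :=
      Finset.single_le_sum (f := fun k => |iteratedDeriv k v θ|)
        (fun i _ => abs_nonneg _) (Finset.mem_Icc.mpr ⟨h1, h2⟩)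
    have := abs_pos.mpr h3
    linarith
  have hpos : 0 < F θ₀ := hFpos θ₀ hθ₀
  refine ⟨s₁, F θ₀ / (s₁ + 1), by positivity, le_max_right _ _, ?_⟩
  intro θ hθ
  by_contra hcon
  push_neg at hcon
  have hlt : ∀ k ∈ Finset.Icc 1 s₁, |iteratedDeriv k v θ| < F θ₀ / (s₁ + 1) := by
    intro k hk
    obtain ⟨h1, h2⟩ := Finset.mem_Icc.mp hk
    exact hcon k h1 h2
  have hne : (Finset.Icc 1 s₁).Nonempty := ⟨1, Finset.mem_Icc.mpr ⟨le_refl 1, le_max_right _ _⟩⟩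
  have hsum := Finset.sum_le_card_nsmul (Finset.Icc 1 s₁)
    (fun k => |iteratedDeriv k v θ|) _ (fun k hk => le_of_lt (hlt k hk))
  rw [Nat.card_Icc] at hsum
  have hcard : (s₁ + 1 - 1 : ℕ) = s₁ := by omega
  rw [hcard, nsmul_eq_mul] at hsum
  have h1 : (s₁ : ℝ) * (F θ₀ / (s₁ + 1)) < F θ₀ := by
    have hs : (0:ℝ) < (s₁:ℝ) + 1 := by positivity
    rw [mul_div_assoc', div_lt_iff₀ hs]
    nlinarith
  have hmm : F θ₀ ≤ F θ := hmin hθ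
  have hFθ : F θ ≤ (s₁ : ℝ) * (F θ₀ / (s₁ + 1)) := hsum
  linarith

private lemma step_eps {v : ℝ → ℝ} (Dcont : ∀ k, Continuous (iteratedDeriv k v)) (s₁ : ℕ)
    {δ : ℝ} (hδ : 0 < δ) :
    ∃ ε : ℝ, 0 < ε ∧ ε ≤ 1/2 ∧ ∀ k ≤ s₁, ∀ x ∈ Icc (-1:ℝ) 2, ∀ y ∈ Icc (-1:ℝ) 2,
      |x - y| ≤ ε → |iteratedDeriv k v x - iteratedDeriv k v y| < δ/2 := by
  set V : ℝ → (Fin (s₁+1) → ℝ) := fun x k => iteratedDeriv k v x with hV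
  have hVc : Continuous V := continuous_pi fun k => Dcont k
  have huc := (isCompact_Icc (a := (-1:ℝ)) (b := 2)).uniformContinuousOn_of_continuous
    hVc.continuousOn
  rw [Metric.uniformContinuousOn_iff] at huc
  obtain ⟨η, hη, hucd⟩ := huc (δ/2) (by linarith)
  refine ⟨min (η/2) (1/2), by positivity, min_le_right _ _, ?_⟩
  intro k hk x hx y hy hxy
  have hdist : dist x y < η := by
    rw [Real.dist_eq]
    calc |x - y| ≤ min (η/2) (1/2) := hxy
      _ ≤ η/2 := min_le_left _ _
      _ < η := by linarith
  have h2 := hucd x hx y hy hdist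
  have hk' : k < s₁ + 1 := Nat.lt_succ_of_le hk
  have hcoord : dist (V x ⟨k, hk'⟩) (V y ⟨k, hk'⟩) ≤ dist (V x) (V y) := dist_le_pi_dist _ _ _
  have h3 : dist (iteratedDeriv k v x) (iteratedDeriv k v y) < δ/2 :=
    lt_of_le_of_lt hcoord h2
  rwa [Real.dist_eq] at h3

private lemma step2mvt {v : ℝ → ℝ} (hvC : ContDiff ℝ (⊤ : ℕ∞) v) (k : ℕ)
    {θ ψ : ℝ} (hψ : ψ ≠ 0) :
    ∃ ξ : ℝ, |ξ - θ| ≤ |ψ| ∧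
      iteratedDeriv k v (θ + ψ) - iteratedDeriv k v θ = ψ * iteratedDeriv (k+1) v ξ := by
  have hlt : ((k : ℕ) : WithTop ℕ∞) < ((⊤ : ℕ∞) : WithTop ℕ∞) := by
    exact_mod_cast WithTop.coe_lt_top (k : ℕ)
  have hd : Differentiable ℝ (iteratedDeriv k v) := hvC.differentiable_iteratedDeriv k hlt
  have hderiv : deriv (iteratedDeriv k v) = iteratedDeriv (k+1) v := (iteratedDeriv_succ).symm
  rcases lt_or_gt_of_ne hψ with hneg | hpos
  · have hab : θ + ψ < θ := by linarith
    obtain ⟨ξ, hξ, heq⟩ := exists_deriv_eq_slope (iteratedDeriv k v) hab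
      hd.continuous.continuousOn hd.differentiableOn
    rw [hderiv] at heq
    refine ⟨ξ, ?_, ?_⟩
    · obtain ⟨h1, h2⟩ := hξ
      rw [abs_of_neg hneg, abs_le]
      constructor <;> linarith
    · have hC : θ - (θ + ψ) ≠ 0 := by intro h; apply hψ; linarith
      rw [heq, ← mul_div_assoc, eq_div_iff hC]; ring
  · have hab : θ < θ + ψ := by linarith
    obtain ⟨ξ, hξ, heq⟩ := exists_deriv_eq_slope (iteratedDeriv k v) hab
      hd.continuous.continuousOn hd.differentiableOn
    rw [hderiv] at heq
    refine ⟨ξ, ?_, ?_⟩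
    · obtain ⟨h1, h2⟩ := hξ
      rw [abs_of_pos hpos, abs_le]
      constructor <;> linarith
    · have hC : θ + ψ - θ ≠ 0 := by intro h; apply hψ; linarith
      rw [heq, ← mul_div_assoc, eq_div_iff hC]; ring

private lemma step3 {v : ℝ → ℝ} (Dcont : ∀ k, Continuous (iteratedDeriv k v))
    (clB : ∀ θ ψ : ℝ, (∀ n : ℤ, ψ ≠ (n:ℝ)) → ∃ l, iteratedDeriv l v (θ + ψ) - iteratedDeriv l v θ ≠ 0)
    {ε : ℝ} (hε : 0 < ε) (hε2 : ε ≤ 1/2) :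
    ∃ (s₂ : ℕ) (m : ℝ), 0 < m ∧ ∀ θ ∈ Icc (0:ℝ) 1, ∀ ψ : ℝ, ε ≤ |ψ| → |ψ| ≤ 1/2 →
      ∃ l ≤ s₂, m ≤ |iteratedDeriv l v (θ + ψ) - iteratedDeriv l v θ| := by
  set K : Set (ℝ × ℝ) := (Icc (0:ℝ) 1) ×ˢ (Icc (-(1/2):ℝ) (1/2) ∩ {ψ | ε ≤ |ψ|}) with hK
  have hKc : IsCompact K :=
    isCompact_Icc.prod (isCompact_Icc.inter_right (isClosed_Ici.preimage continuous_abs))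
  have hKne : K.Nonempty := by
    refine ⟨(0, 1/2), ?_⟩
    constructor
    · exact ⟨le_refl 0, zero_le_one⟩
    · constructor
      · constructor <;> norm_num
      · show ε ≤ |1/2|; rw [abs_of_pos (by norm_num)]; exact hε2
  have hnotint : ∀ p ∈ K, ∀ n : ℤ, p.2 ≠ (n:ℝ) := by
    rintro ⟨θ, ψ⟩ hp n rfl
    obtain ⟨-, ⟨hmem, hεψ⟩⟩ := hp
    have h1 : |(n:ℝ)| < 1 := lt_of_le_of_lt (abs_le.mpr ⟨hmem.1, hmem.2⟩) (by norm_num)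
    have h2 : |(n:ℝ)| = (|n| : ℤ) := by push_cast [Int.cast_abs]; ring
    have h3 : |n| < 1 := by exact_mod_cast h2 ▸ h1
    have h4 : n = 0 := Int.abs_lt_one_iff.mp h3
    rw [h4] at hεψ
    simp at hεψ
    linarith [hεψ, hε]
  set W : ℕ → Set (ℝ × ℝ) := fun s =>
    {p | ∃ l ≤ s, iteratedDeriv l v (p.1 + p.2) - iteratedDeriv l v p.1 ≠ 0} with hW
  have hWopen : ∀ s, IsOpen (W s) := by
    intro s
    have : W s = ⋃ l ∈ Finset.range (s+1),
        {p : ℝ × ℝ | iteratedDeriv l v (p.1 + p.2) - iteratedDeriv l v p.1 ≠ 0} := by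
      ext p
      simp only [hW, mem_setOf_eq, mem_iUnion, Finset.mem_range, exists_prop]
      constructor
      · rintro ⟨l, h1, h2⟩; exact ⟨l, Nat.lt_succ_of_le h1, h2⟩
      · rintro ⟨l, h1, h2⟩; exact ⟨l, Nat.lt_succ_iff.mp h1, h2⟩
    rw [this]
    refine isOpen_biUnion fun l _ => ?_
    have hc : Continuous fun p : ℝ × ℝ =>
        iteratedDeriv l v (p.1 + p.2) - iteratedDeriv l v p.1 :=
      (((Dcont l).comp (continuous_fst.add continuous_snd)).sub
        ((Dcont l).comp continuous_fst))
    exact isOpen_compl_singleton.preimage hc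
  have hcover : K ⊆ ⋃ s : ℕ, W s := by
    rintro ⟨θ, ψ⟩ hp
    obtain ⟨l, hl⟩ := clB θ ψ (hnotint _ hp)
    exact mem_iUnion.mpr ⟨l, l, le_refl l, hl⟩
  obtain ⟨t, ht⟩ := hKc.elim_finite_subcover W hWopen hcover
  set s₂ := t.sup id with hs₂
  have hall : ∀ p ∈ K, ∃ l ≤ s₂, iteratedDeriv l v (p.1 + p.2) - iteratedDeriv l v p.1 ≠ 0 := by
    intro p hp
    obtain ⟨s, hs, ⟨l, h1, h2⟩⟩ := mem_iUnion₂.mp (ht hp)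
    exact ⟨l, le_trans h1 (Finset.le_sup (f := id) hs), h2⟩
  set G : ℝ × ℝ → ℝ := fun p =>
    ∑ l ∈ Finset.range (s₂+1), |iteratedDeriv l v (p.1 + p.2) - iteratedDeriv l v p.1| with hG
  have hGc : Continuous G := by
    refine continuous_finset_sum _ fun l _ => ?_
    exact (((Dcont l).comp (continuous_fst.add continuous_snd)).sub
      ((Dcont l).comp continuous_fst)).abs
  obtain ⟨p₀, hp₀, hmin⟩ := hKc.exists_isMinOn hKne hGc.continuousOn
  have hGpos : ∀ p ∈ K, 0 < G p := by
    intro p hp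
    obtain ⟨l, h1, h2⟩ := hall p hp
    have hle : |iteratedDeriv l v (p.1 + p.2) - iteratedDeriv l v p.1| ≤ G p :=
      Finset.single_le_sum (f := fun l => |iteratedDeriv l v (p.1 + p.2) - iteratedDeriv l v p.1|)
        (fun i _ => abs_nonneg _) (Finset.mem_range.mpr (Nat.lt_succ_of_le h1))
    have := abs_pos.mpr h2
    linarith
  have hpos : 0 < G p₀ := hGpos p₀ hp₀
  refine ⟨s₂, G p₀ / (s₂ + 1), by positivity, ?_⟩
  intro θ hθ ψ h1 h2
  have hpK : (θ, ψ) ∈ K := by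
    refine ⟨hθ, ⟨abs_le.mp h2, h1⟩⟩
  by_contra hcon
  push_neg at hcon
  have hlt : ∀ l ∈ Finset.range (s₂+1),
      |iteratedDeriv l v (θ + ψ) - iteratedDeriv l v θ| < G p₀ / (s₂ + 1) := by
    intro l hl
    exact hcon l (Nat.lt_succ_iff.mp (Finset.mem_range.mp hl))
  have hc : ((s₂+1 : ℕ) : ℝ) * (G p₀ / (s₂ + 1)) = G p₀ := by
    push_cast
    field_simp
  have hmm : G p₀ ≤ G (θ, ψ) := hmin hpK
  have hne : (Finset.range (s₂+1)).Nonempty := ⟨0, Finset.mem_range.mpr (Nat.succ_pos _)⟩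
  have hstrict : ∑ l ∈ Finset.range (s₂+1), |iteratedDeriv l v (θ + ψ) - iteratedDeriv l v θ|
      < ∑ _l ∈ Finset.range (s₂+1), (G p₀ / (s₂ + 1)) :=
    Finset.sum_lt_sum_of_nonempty hne hlt
  rw [Finset.sum_const, Finset.card_range, nsmul_eq_mul, hc] at hstrict
  have hGv : G (θ, ψ) = ∑ l ∈ Finset.range (s₂+1),
      |iteratedDeriv l v (θ + ψ) - iteratedDeriv l v θ| := rfl
  rw [hGv] at hmm
  linarith

/-- Transversality of a non-constant real analytic function with shortest period 1:
there exist `s ∈ ℕ` and `c > 0` such that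
`max_{0≤l≤s} |∂_θ^l (v(θ+φ) − v(θ))| ≥ c ‖φ‖_𝕋` for all `θ, φ`, where
`‖φ‖_𝕋 = dist(φ, ℤ) = |φ − round φ|`. -/
theorem analytic_transversality (v : ℝ → ℝ)
    (hv : ∀ x : ℝ, AnalyticAt ℝ v x)
    (hper : Function.Periodic v 1)
    (hshort : ∀ p : ℝ, 0 < p → p < 1 → ¬ Function.Periodic v p)
    (hnc : ∃ x y : ℝ, v x ≠ v y) :
    ∃ (s : ℕ) (c : ℝ), 0 < c ∧ ∀ θ φ : ℝ, ∃ l ≤ s,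
      c * |φ - round φ| ≤ |iteratedDeriv l (fun t => v (t + φ) - v t) θ| := by
  have hvC : ContDiff ℝ (⊤ : ℕ∞) v := contDiff_iff_contDiffAt.mpr fun x => (hv x).contDiffAt
  have Dcont : ∀ k, Continuous (iteratedDeriv k v) := fun k =>
    hvC.continuous_iteratedDeriv k (le_of_lt (by exact_mod_cast WithTop.coe_lt_top (k : ℕ)))
  have Dper : ∀ k, Function.Periodic (iteratedDeriv k v) 1 := periodic_iteratedDeriv hper
  obtain ⟨s₁, δ, hδ, hs₁1, hδall⟩ := step1 Dcont (claimA hv hvC hnc)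
  obtain ⟨ε, hε, hε2, hεuc⟩ := step_eps Dcont s₁ hδ
  obtain ⟨s₂, m, hm, hbig⟩ := step3 Dcont (claimB hv hvC hper hshort) hε hε2
  refine ⟨max s₁ s₂, min (δ/2) (2*m), lt_min (by linarith) (by linarith), ?_⟩
  intro θ φ
  set ψ := φ - round φ with hψdef
  set θ' := Int.fract θ with hθ'def
  have hθ'mem : θ' ∈ Icc (0:ℝ) 1 := ⟨Int.fract_nonneg θ, le_of_lt (Int.fract_lt_one θ)⟩
  have hIntShift : ∀ (l : ℕ) (x : ℝ) (n : ℤ), iteratedDeriv l v (x + n) = iteratedDeriv l v x := by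
    intro l x n
    have h0 := Function.Periodic.sub_int_mul_eq (Dper l) (x := x + (n:ℝ)) n
    rw [show (x + (n:ℝ)) - n*1 = x by ring] at h0
    exact h0.symm
  have hrw : ∀ l, iteratedDeriv l (fun t => v (t + φ) - v t) θ
      = iteratedDeriv l v (θ' + ψ) - iteratedDeriv l v θ' := by
    intro l
    rw [key_rewrite hvC]
    have e3 : iteratedDeriv l v θ' = iteratedDeriv l v θ := by
      have h1 := hIntShift l θ' ⌊θ⌋
      rw [show θ' + ((⌊θ⌋:ℤ):ℝ) = θ from by rw [hθ'def]; exact Int.fract_add_floor θ] at h1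
      exact h1.symm
    have e4 : iteratedDeriv l v (θ' + ψ) = iteratedDeriv l v (θ + φ) := by
      have h1 := hIntShift l (θ' + ψ) (⌊θ⌋ + round φ)
      rw [show θ' + ψ + ((⌊θ⌋ + round φ : ℤ):ℝ) = θ + φ from by
        push_cast
        rw [hθ'def, hψdef]
        have h2 : Int.fract θ = θ - ⌊θ⌋ := rfl
        rw [h2]; ring] at h1
      exact h1.symm
    rw [← e4, ← e3]
  have habs : |ψ| ≤ 1/2 := by rw [hψdef]; exact abs_sub_round φ
  rcases le_or_gt |ψ| ε with hsmall | hbigc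
  · rcases eq_or_ne ψ 0 with h0 | h0
    · refine ⟨0, Nat.zero_le _, ?_⟩
      rw [hrw 0, h0]
      simp
    · obtain ⟨k, hk1, hk2, hkδ⟩ := hδall θ' hθ'mem
      obtain ⟨ξ, hξd, hξeq⟩ := step2mvt hvC (k-1) (θ := θ') (ψ := ψ) h0
      have hk1' : k - 1 + 1 = k := by omega
      rw [hk1'] at hξeq
      have hψhalf := abs_le.mp habs
      have hξd' := abs_le.mp (le_trans hξd habs)
      have hξmem : ξ ∈ Icc (-1:ℝ) 2 := by
        constructor
        · linarith [hθ'mem.1, hξd'.1]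
        · linarith [hθ'mem.2, hξd'.2]
      have hθ'mem2 : θ' ∈ Icc (-1:ℝ) 2 := ⟨by linarith [hθ'mem.1], by linarith [hθ'mem.2]⟩
      have hclose : |ξ - θ'| ≤ ε := le_trans hξd hsmall
      have hdiff := hεuc k hk2 ξ hξmem θ' hθ'mem2 hclose
      have hξbig : δ/2 ≤ |iteratedDeriv k v ξ| := by
        have h6 : |iteratedDeriv k v θ'| - |iteratedDeriv k v ξ| ≤
            |iteratedDeriv k v θ' - iteratedDeriv k v ξ| := abs_sub_abs_le_abs_sub _ _
        rw [abs_sub_comm] at h6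
        linarith
      refine ⟨k-1, le_trans (le_trans (Nat.sub_le k 1) hk2) (le_max_left _ _), ?_⟩
      rw [hrw (k-1), hξeq, abs_mul]
      calc min (δ/2) (2*m) * |ψ| ≤ (δ/2) * |ψ| :=
            mul_le_mul_of_nonneg_right (min_le_left _ _) (abs_nonneg _)
        _ ≤ |iteratedDeriv k v ξ| * |ψ| := mul_le_mul_of_nonneg_right hξbig (abs_nonneg _)
        _ = |ψ| * |iteratedDeriv k v ξ| := mul_comm _ _
  · obtain ⟨l, hl, hlb⟩ := hbig θ' hθ'mem ψ (le_of_lt hbigc) habs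
    refine ⟨l, le_trans hl (le_max_right _ _), ?_⟩
    rw [hrw l]
    calc min (δ/2) (2*m) * |ψ| ≤ (2*m) * (1/2) :=
          mul_le_mul (min_le_right _ _) habs (abs_nonneg _) (by linarith)
      _ = m := by ring
      _ ≤ _ := hlb
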